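/- Let d ∈ ℕ and 0 < α < d. There exists a constant c₄ > 0, depending only on α and d, such that for every θ ∈ [0,1] and all Lebesgue-measurable sets A, B ⊆ ℝ^d of finite measure, ‖I_α^θ(χ_A, χ_B)‖_{L^{d/α, ∞}(ℝ^d)} ≤ c₄ |A|^{α/d} |B|^{α/d}. -/

import Mathlib

open MeasureTheory ENNReal

/-- The bilinear fractional integral operator
`I_α^θ(f,g)(x) = ∫_{ℝ^d} f(x + (θ−1)y) g(x + θy) |y|^{α−d} dy`. -/
noncomputable def Iop (d : ℕ) (α θ : ℝ)
    (f g : EuclideanSpace ℝ (Fin d) → ℝ≥0∞) (x : EuclideanSpace ℝ (Fin d)) : ℝ≥0∞ :=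
  ∫⁻ y : EuclideanSpace ℝ (Fin d),
    f (x + (θ - 1) • y) * g (x + θ • y) * ENNReal.ofReal (‖y‖ ^ (α - (d : ℝ)))

/-- The weak `L^r` quasi-norm `sup_{λ > 0} λ · |{x : h x > λ}|^{1/r}`. -/
noncomputable def wLp (d : ℕ) (r : ℝ)
    (h : EuclideanSpace ℝ (Fin d) → ℝ≥0∞) : ℝ≥0∞ :=
  ⨆ (lam : ℝ) (_ : 0 < lam),
    ENNReal.ofReal lam * (volume {x | ENNReal.ofReal lam < h x}) ^ (1 / r)

section Stmt11Aux

open Metric Set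

variable {d : ℕ} {α : ℝ}

private noncomputable def wker (d : ℕ) (α : ℝ) (y : EuclideanSpace ℝ (Fin d)) : ℝ≥0∞ :=
  ENNReal.ofReal (‖y‖ ^ (α - (d : ℝ)))

private noncomputable def Cball (d : ℕ) (α : ℝ) : ℝ≥0∞ :=
  volume (ball (0 : EuclideanSpace ℝ (Fin d)) 1) * ENNReal.ofReal ((2:ℝ) ^ ((d:ℝ) - α)) *
    (1 - ENNReal.ofReal ((2:ℝ) ^ (-α)))⁻¹

private noncomputable def CS (d : ℕ) (α : ℝ) : ℝ≥0∞ := Cball d α + 2 ^ d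

private lemma exists_dyadic {R t : ℝ} (hR : 0 < R) (ht : 0 < t) (htR : t ≤ R) :
    ∃ k : ℕ, R * (1/2) ^ (k+1) < t ∧ t ≤ R * (1/2) ^ k := by
  have hhalf : (1/2 : ℝ) < 1 := by norm_num
  have hne : ∃ n : ℕ, R * (1/2) ^ n < t := by
    obtain ⟨n, hn⟩ := exists_pow_lt_of_lt_one (div_pos ht hR) hhalf
    exact ⟨n, by rw [mul_comm]; exact (lt_div_iff₀ hR).mp hn⟩
  classical
  let m := Nat.find hne
  have hm : R * (1/2) ^ m < t := Nat.find_spec hne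
  have hm0 : m ≠ 0 := by
    intro h
    rw [h] at hm; simp at hm; linarith
  refine ⟨m - 1, ?_, ?_⟩
  · have : m - 1 + 1 = m := Nat.succ_pred_eq_of_pos (Nat.pos_of_ne_zero hm0)
    rwa [this]
  · have := Nat.find_min hne (m := m - 1) (Nat.pred_lt hm0)
    linarith [not_lt.mp this]

private lemma half_pow (n : ℕ) : ((1:ℝ)/2) ^ n = (2:ℝ) ^ (-(n:ℝ)) := by
  rw [Real.rpow_neg (by norm_num : (0:ℝ) ≤ 2), Real.rpow_natCast]
  rw [one_div, inv_pow]

private lemma dyadic_calc {d : ℕ} {α : ℝ} {R : ℝ} (hR : 0 < R) (k : ℕ) :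
    (R * (1/2) ^ (k+1)) ^ (α - (d:ℝ)) * (R * (1/2) ^ k) ^ (d:ℕ)
      = (R ^ α * 2 ^ ((d:ℝ) - α)) * ((2:ℝ) ^ (-α)) ^ k := by
  have h2 : (0:ℝ) ≤ 2 := by norm_num
  have h2' : (0:ℝ) < 2 := by norm_num
  have e1 : (R * (1/2) ^ (k+1)) ^ (α - (d:ℝ))
      = R ^ (α - (d:ℝ)) * (2:ℝ) ^ (-((k:ℝ)+1) * (α - (d:ℝ))) := by
    rw [half_pow, Real.mul_rpow hR.le (Real.rpow_nonneg h2 _), ← Real.rpow_mul h2]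
    push_cast
    ring_nf
  have e2 : (R * (1/2) ^ k) ^ (d:ℕ) = R ^ ((d:ℝ)) * (2:ℝ) ^ (-(k:ℝ) * (d:ℝ)) := by
    rw [half_pow, ← Real.rpow_natCast (R * _) d, Real.mul_rpow hR.le (Real.rpow_nonneg h2 _),
      ← Real.rpow_mul h2]
  have e3 : ((2:ℝ) ^ (-α)) ^ k = (2:ℝ) ^ (-α * (k:ℝ)) := by
    rw [← Real.rpow_natCast ((2:ℝ) ^ (-α)) k, ← Real.rpow_mul h2]
  rw [e1, e2, e3]
  rw [show R ^ (α - (d:ℝ)) * (2:ℝ) ^ (-((k:ℝ)+1) * (α - (d:ℝ))) * (R ^ ((d:ℝ)) * (2:ℝ) ^ (-(k:ℝ) * (d:ℝ)))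
      = (R ^ (α - (d:ℝ)) * R ^ ((d:ℝ))) * ((2:ℝ) ^ (-((k:ℝ)+1) * (α - (d:ℝ))) * (2:ℝ) ^ (-(k:ℝ) * (d:ℝ))) by ring,
    ← Real.rpow_add hR, ← Real.rpow_add h2',
    show R ^ α * 2 ^ ((d:ℝ) - α) * 2 ^ (-α * (k:ℝ)) = R ^ α * (2 ^ ((d:ℝ) - α) * 2 ^ (-α * (k:ℝ))) by ring,
    ← Real.rpow_add h2']
  congr 1 <;> ring

private lemma ballInt (hα0 : 0 < α) (hαd : α < (d:ℝ)) {R : ℝ} (hR : 0 ≤ R) :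
    ∫⁻ y in closedBall (0 : EuclideanSpace ℝ (Fin d)) R, wker d α y
      ≤ Cball d α * ENNReal.ofReal (R ^ α) := by
  have hαd' : α - (d:ℝ) ≠ 0 := by linarith
  have hw0 : wker d α (0 : EuclideanSpace ℝ (Fin d)) = 0 := by
    simp [wker, Real.zero_rpow hαd']
  rcases eq_or_lt_of_le hR with hR0 | hRpos
  · rw [← hR0, closedBall_zero, lintegral_singleton, hw0, zero_mul]
    exact zero_le
  set q : ℝ≥0∞ := ENNReal.ofReal ((2:ℝ) ^ (-α)) with hq
  set Ann : ℕ → Set (EuclideanSpace ℝ (Fin d)) :=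
    fun k => closedBall 0 (R*(1/2)^k) \ closedBall 0 (R*(1/2)^(k+1)) with hAnn
  have hcover : closedBall (0 : EuclideanSpace ℝ (Fin d)) R ⊆ {0} ∪ ⋃ k : ℕ, Ann k := by
    intro y hy
    rcases eq_or_ne y 0 with rfl | hy0
    · exact Or.inl rfl
    · refine Or.inr (mem_iUnion.mpr ?_)
      obtain ⟨k, hk1, hk2⟩ := exists_dyadic hRpos (norm_pos_iff.mpr hy0)
        (mem_closedBall_zero_iff.mp hy)
      exact ⟨k, mem_closedBall_zero_iff.mpr hk2,
        fun hmem => absurd (mem_closedBall_zero_iff.mp hmem) (not_le.mpr hk1)⟩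
  have hterm : ∀ k : ℕ, ∫⁻ y in Ann k, wker d α y
      ≤ (ENNReal.ofReal (R ^ α * 2 ^ ((d:ℝ) - α)) * q ^ k) *
        volume (ball (0 : EuclideanSpace ℝ (Fin d)) 1) := by
    intro k
    have hrk : (0:ℝ) < R * (1/2) ^ (k+1) := by positivity
    have hrk' : (0:ℝ) ≤ R * (1/2) ^ k := by positivity
    calc ∫⁻ y in Ann k, wker d α y
        ≤ ∫⁻ _ in Ann k, ENNReal.ofReal ((R * (1/2) ^ (k+1)) ^ (α - (d:ℝ))) := by
          refine setLIntegral_mono' ((measurableSet_closedBall).diff measurableSet_closedBall)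
            fun y hy => ?_
          refine ENNReal.ofReal_le_ofReal ?_
          refine Real.rpow_le_rpow_of_nonpos hrk ?_ (by linarith)
          have := hy.2
          rw [mem_closedBall_zero_iff] at this
          push_neg at this
          exact this.le
      _ = ENNReal.ofReal ((R * (1/2) ^ (k+1)) ^ (α - (d:ℝ))) * volume (Ann k) :=
          setLIntegral_const _ _
      _ ≤ ENNReal.ofReal ((R * (1/2) ^ (k+1)) ^ (α - (d:ℝ))) *
            volume (closedBall (0 : EuclideanSpace ℝ (Fin d)) (R*(1/2)^k)) :=
          mul_le_mul_right (measure_mono diff_subset) _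
      _ = (ENNReal.ofReal (R ^ α * 2 ^ ((d:ℝ) - α)) * q ^ k) *
            volume (ball (0 : EuclideanSpace ℝ (Fin d)) 1) := by
          rw [Measure.addHaar_closedBall _ _ hrk', finrank_euclideanSpace_fin,
            ← mul_assoc, ← ENNReal.ofReal_mul (Real.rpow_nonneg hrk.le _), dyadic_calc hRpos,
            ENNReal.ofReal_mul (by positivity), hq, ← ENNReal.ofReal_pow (by positivity)]
  calc ∫⁻ y in closedBall (0 : EuclideanSpace ℝ (Fin d)) R, wker d α y
      ≤ ∫⁻ y in ({0} ∪ ⋃ k : ℕ, Ann k : Set (EuclideanSpace ℝ (Fin d))), wker d α y :=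
        lintegral_mono_set hcover
    _ ≤ (∫⁻ y in ({0} : Set (EuclideanSpace ℝ (Fin d))), wker d α y)
        + ∫⁻ y in (⋃ k : ℕ, Ann k), wker d α y := lintegral_union_le _ _ _
    _ ≤ 0 + ∑' k : ℕ, ∫⁻ y in Ann k, wker d α y := by
        refine add_le_add ?_ (lintegral_iUnion_le _ _)
        rw [lintegral_singleton, hw0, zero_mul]
    _ ≤ ∑' k : ℕ, (ENNReal.ofReal (R ^ α * 2 ^ ((d:ℝ) - α)) * q ^ k) *
          volume (ball (0 : EuclideanSpace ℝ (Fin d)) 1) := by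
        rw [zero_add]
        exact ENNReal.tsum_le_tsum hterm
    _ = ENNReal.ofReal (R ^ α * 2 ^ ((d:ℝ) - α)) * volume (ball (0 : EuclideanSpace ℝ (Fin d)) 1)
          * (1 - q)⁻¹ := by
        rw [show ∑' k : ℕ, (ENNReal.ofReal (R ^ α * 2 ^ ((d:ℝ) - α)) * q ^ k) *
              volume (ball (0 : EuclideanSpace ℝ (Fin d)) 1)
            = ∑' k : ℕ, (ENNReal.ofReal (R ^ α * 2 ^ ((d:ℝ) - α)) *
              volume (ball (0 : EuclideanSpace ℝ (Fin d)) 1)) * q ^ k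
            from tsum_congr fun k => by ring,
          ENNReal.tsum_mul_left, ENNReal.tsum_geometric]
    _ = Cball d α * ENNReal.ofReal (R ^ α) := by
        rw [Cball, ENNReal.ofReal_mul (Real.rpow_nonneg hR _)]
        ring

-- integral of a translated-dilated indicator
private lemma meas_comp {Q : Set (EuclideanSpace ℝ (Fin d))} (hQm : MeasurableSet Q)
    (x : EuclideanSpace ℝ (Fin d)) {c : ℝ} (hc : c ≠ 0) :
    ∫⁻ y, Q.indicator (1 : EuclideanSpace ℝ (Fin d) → ℝ≥0∞) (x + c • y) = ENNReal.ofReal |((c:ℝ) ^ d)⁻¹| * volume Q := by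
  have hmap : Measurable fun y : EuclideanSpace ℝ (Fin d) => x + c • y := by fun_prop
  have h1 : (fun y : EuclideanSpace ℝ (Fin d) => Q.indicator (1 : EuclideanSpace ℝ (Fin d) → ℝ≥0∞) (x + c • y))
      = ((fun y : EuclideanSpace ℝ (Fin d) => x + c • y) ⁻¹' Q).indicator (1 : EuclideanSpace ℝ (Fin d) → ℝ≥0∞) := by
    funext y
    simp only [Set.indicator]
    by_cases h : x + c • y ∈ Q <;> simp [h, Set.mem_preimage]
  rw [h1, lintegral_indicator_one (hmap hQm)]
  have h2 : (fun y : EuclideanSpace ℝ (Fin d) => x + c • y) ⁻¹' Q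
      = (c • ·) ⁻¹' ((x + ·) ⁻¹' Q) := rfl
  rw [h2, Measure.addHaar_preimage_smul volume hc, measure_preimage_add,
    finrank_euclideanSpace_fin]

private lemma ind_le_one (Q : Set (EuclideanSpace ℝ (Fin d)))
    (z : EuclideanSpace ℝ (Fin d)) :
    Q.indicator (1 : EuclideanSpace ℝ (Fin d) → ℝ≥0∞) z ≤ 1 := by
  by_cases h : z ∈ Q <;> simp [h]

private lemma lemS (hα0 : 0 < α) (hαd : α < (d:ℝ))
    {Q : Set (EuclideanSpace ℝ (Fin d))} (hQm : MeasurableSet Q) (hQ : volume Q ≠ ∞)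
    {c : ℝ} (hc : 1/2 ≤ |c|) (h : EuclideanSpace ℝ (Fin d) → ℝ≥0∞) (hh : ∀ y, h y ≤ 1)
    (x : EuclideanSpace ℝ (Fin d)) :
    ∫⁻ y, h y * Q.indicator (1 : EuclideanSpace ℝ (Fin d) → ℝ≥0∞) (x + c • y) * wker d α y
      ≤ CS d α * (volume Q) ^ (α / (d:ℝ)) := by
  have hd0 : (0:ℝ) < d := lt_trans hα0 hαd
  have hc0 : c ≠ 0 := by
    intro h0; rw [h0] at hc; simp at hc; linarith
  set V := volume Q with hV
  -- the dilation factor is at most 2^d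
  have hfac : ENNReal.ofReal |((c:ℝ) ^ d)⁻¹| ≤ 2 ^ d := by
    have h1 : |((c:ℝ) ^ d)⁻¹| = (|c| ^ d)⁻¹ := by
      rw [abs_inv, abs_pow]
    have h2 : ((1:ℝ)/2) ^ d ≤ |c| ^ d := pow_le_pow_left₀ (by norm_num) hc d
    have h3 : (|c| ^ d)⁻¹ ≤ (((1:ℝ)/2) ^ d)⁻¹ := by
      apply inv_anti₀ (by positivity) h2
    have h4 : (((1:ℝ)/2) ^ d)⁻¹ = 2 ^ d := by
      rw [one_div, inv_pow, inv_inv]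
    rw [h1]
    calc ENNReal.ofReal ((|c| ^ d)⁻¹) ≤ ENNReal.ofReal ((((1:ℝ)/2) ^ d)⁻¹) :=
          ENNReal.ofReal_le_ofReal h3
      _ = 2 ^ d := by
          rw [h4, ← ENNReal.ofReal_ofNat 2, ← ENNReal.ofReal_pow (by norm_num)]
  rcases eq_or_ne V 0 with hV0 | hV0
  · -- the set is null: integral vanishes
    have hnull : volume {y : EuclideanSpace ℝ (Fin d) | x + c • y ∈ Q} = 0 := by
      have := meas_comp hQm x hc0
      rw [← hV, hV0, mul_zero] at this
      have heq : {y : EuclideanSpace ℝ (Fin d) | x + c • y ∈ Q}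
          = (fun y : EuclideanSpace ℝ (Fin d) => x + c • y) ⁻¹' Q := rfl
      -- ∫ indicator = measure of preimage
      have hmap : Measurable fun y : EuclideanSpace ℝ (Fin d) => x + c • y := by fun_prop
      have h1 : (fun y : EuclideanSpace ℝ (Fin d) =>
          Q.indicator (1 : EuclideanSpace ℝ (Fin d) → ℝ≥0∞) (x + c • y))
          = ((fun y : EuclideanSpace ℝ (Fin d) => x + c • y) ⁻¹' Q).indicator
              (1 : EuclideanSpace ℝ (Fin d) → ℝ≥0∞) := by
        funext y
        by_cases hy : x + c • y ∈ Q <;> simp [Set.indicator, hy, Set.mem_preimage]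
      rw [h1, lintegral_indicator_one (hmap hQm)] at this
      rw [heq]; exact this
    have hzero : ∀ᵐ y ∂(volume : Measure (EuclideanSpace ℝ (Fin d))),
        h y * Q.indicator (1 : EuclideanSpace ℝ (Fin d) → ℝ≥0∞) (x + c • y)
          * wker d α y = (0:ℝ≥0∞) := by
      rw [ae_iff]
      refine measure_mono_null (fun y hy => ?_) hnull
      simp only [Set.mem_setOf_eq] at hy ⊢
      by_contra hmem
      exact hy (by rw [Set.indicator_of_notMem hmem, mul_zero, zero_mul])
    calc ∫⁻ y, h y * Q.indicator (1 : EuclideanSpace ℝ (Fin d) → ℝ≥0∞) (x + c • y) * wker d α y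
        = ∫⁻ _y : EuclideanSpace ℝ (Fin d), (0:ℝ≥0∞) := lintegral_congr_ae hzero
      _ = 0 := lintegral_zero
      _ ≤ CS d α * V ^ (α / (d:ℝ)) := zero_le
  · -- main case : 0 < V < ∞, choose R = V^{1/d}
    set R : ℝ := V.toReal ^ (1/(d:ℝ)) with hR
    have hVtop : V ≠ ∞ := hQ
    have hVt : 0 < V.toReal := ENNReal.toReal_pos hV0 hVtop
    have hRpos : 0 < R := Real.rpow_pos_of_pos hVt _
    have key1 : ENNReal.ofReal (R ^ α) = V ^ (α / (d:ℝ)) := by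
      rw [hR, ← Real.rpow_mul hVt.le, ← ENNReal.ofReal_rpow_of_pos hVt,
        ENNReal.ofReal_toReal hVtop]
      congr 1
      field_simp
    have key2 : ENNReal.ofReal (R ^ (α - (d:ℝ))) * V = V ^ (α / (d:ℝ)) := by
      rw [hR, ← Real.rpow_mul hVt.le, ← ENNReal.ofReal_rpow_of_pos hVt,
        ENNReal.ofReal_toReal hVtop]
      have h5 : V ^ (1/(d:ℝ)*(α-(d:ℝ))) * V ^ (1:ℝ) = V ^ (α/(d:ℝ)) := by
        rw [← ENNReal.rpow_add _ _ hV0 hVtop]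
        congr 1
        field_simp
        ring
      rw [ENNReal.rpow_one] at h5
      exact h5
    calc ∫⁻ y, h y * Q.indicator (1 : EuclideanSpace ℝ (Fin d) → ℝ≥0∞) (x + c • y) * wker d α y
        = (∫⁻ y in closedBall (0 : EuclideanSpace ℝ (Fin d)) R,
            h y * Q.indicator (1 : EuclideanSpace ℝ (Fin d) → ℝ≥0∞) (x + c • y) * wker d α y)
          + ∫⁻ y in (closedBall (0 : EuclideanSpace ℝ (Fin d)) R)ᶜ,
            h y * Q.indicator (1 : EuclideanSpace ℝ (Fin d) → ℝ≥0∞) (x + c • y) * wker d α y :=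
          (lintegral_add_compl _ measurableSet_closedBall).symm
      _ ≤ (∫⁻ y in closedBall (0 : EuclideanSpace ℝ (Fin d)) R, wker d α y)
          + ∫⁻ y, ENNReal.ofReal (R ^ (α - (d:ℝ)))
              * Q.indicator (1 : EuclideanSpace ℝ (Fin d) → ℝ≥0∞) (x + c • y) := by
          refine add_le_add ?_ ?_
          · refine lintegral_mono fun y => ?_
            calc h y * Q.indicator _ (x + c • y) * wker d α y
                ≤ 1 * 1 * wker d α y :=
                  mul_le_mul' (mul_le_mul' (hh y) (ind_le_one _ _)) le_rfl
              _ = wker d α y := by rw [one_mul, one_mul]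
          · calc ∫⁻ y in (closedBall (0 : EuclideanSpace ℝ (Fin d)) R)ᶜ,
                h y * Q.indicator (1 : EuclideanSpace ℝ (Fin d) → ℝ≥0∞) (x + c • y) * wker d α y
                ≤ ∫⁻ y in (closedBall (0 : EuclideanSpace ℝ (Fin d)) R)ᶜ,
                  ENNReal.ofReal (R ^ (α - (d:ℝ)))
                    * Q.indicator (1 : EuclideanSpace ℝ (Fin d) → ℝ≥0∞) (x + c • y) := by
                  refine setLIntegral_mono' measurableSet_closedBall.compl fun y hy => ?_
                  have hyR : R < ‖y‖ := by
                    simpa [mem_closedBall_zero_iff] using hy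
                  have hw : wker d α y ≤ ENNReal.ofReal (R ^ (α - (d:ℝ))) :=
                    ENNReal.ofReal_le_ofReal
                      (Real.rpow_le_rpow_of_nonpos hRpos hyR.le (by linarith))
                  calc h y * Q.indicator _ (x + c • y) * wker d α y
                      ≤ 1 * Q.indicator _ (x + c • y) * ENNReal.ofReal (R ^ (α - (d:ℝ))) :=
                        mul_le_mul' (mul_le_mul' (hh y) le_rfl) hw
                    _ = ENNReal.ofReal (R ^ (α - (d:ℝ)))
                          * Q.indicator (1 : EuclideanSpace ℝ (Fin d) → ℝ≥0∞) (x + c • y) := by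
                        rw [one_mul, mul_comm]
              _ ≤ ∫⁻ y, ENNReal.ofReal (R ^ (α - (d:ℝ)))
                    * Q.indicator (1 : EuclideanSpace ℝ (Fin d) → ℝ≥0∞) (x + c • y) :=
                  setLIntegral_le_lintegral _ _
      _ ≤ Cball d α * ENNReal.ofReal (R ^ α)
          + ENNReal.ofReal (R ^ (α - (d:ℝ))) * (ENNReal.ofReal |((c:ℝ) ^ d)⁻¹| * V) := by
          refine add_le_add (ballInt hα0 hαd hRpos.le) ?_
          rw [lintegral_const_mul' _ _ ENNReal.ofReal_ne_top, meas_comp hQm x hc0]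
      _ ≤ Cball d α * V ^ (α / (d:ℝ)) + 2 ^ d * V ^ (α / (d:ℝ)) := by
          refine add_le_add (by rw [key1]) ?_
          calc ENNReal.ofReal (R ^ (α - (d:ℝ))) * (ENNReal.ofReal |((c:ℝ) ^ d)⁻¹| * V)
              ≤ ENNReal.ofReal (R ^ (α - (d:ℝ))) * (2 ^ d * V) :=
                mul_le_mul' le_rfl (mul_le_mul' hfac le_rfl)
            _ = 2 ^ d * (ENNReal.ofReal (R ^ (α - (d:ℝ))) * V) := by ring
            _ = 2 ^ d * V ^ (α / (d:ℝ)) := by rw [key2]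
      _ = CS d α * V ^ (α / (d:ℝ)) := by rw [CS]; ring

private lemma Cball_ne_top (hα0 : 0 < α) : Cball d α ≠ ∞ := by
  refine ENNReal.mul_ne_top (ENNReal.mul_ne_top measure_ball_lt_top.ne ENNReal.ofReal_ne_top) ?_
  rw [Ne, ENNReal.inv_eq_top, tsub_eq_zero_iff_le, not_le]
  exact ENNReal.ofReal_lt_one.mpr
    (Real.rpow_lt_one_of_one_lt_of_neg one_lt_two (neg_lt_zero.mpr hα0))

private lemma CS_ne_top (hα0 : 0 < α) : CS d α ≠ ∞ := by
  rw [CS]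
  exact ENNReal.add_ne_top.mpr ⟨Cball_ne_top hα0, by simp⟩

private lemma ind_meas2 {S : Set (EuclideanSpace ℝ (Fin d))} (hS : MeasurableSet S)
    {T : EuclideanSpace ℝ (Fin d) × EuclideanSpace ℝ (Fin d) → EuclideanSpace ℝ (Fin d)}
    (hT : Measurable T) :
    Measurable fun p => S.indicator (1 : EuclideanSpace ℝ (Fin d) → ℝ≥0∞) (T p) :=
  (measurable_const.indicator hS).comp hT

private lemma lemT0 (hα0 : 0 < α) (hαd : α < (d:ℝ))
    {P Q : Set (EuclideanSpace ℝ (Fin d))} (hPm : MeasurableSet P) (hQm : MeasurableSet Q)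
    (hQ : volume Q ≠ ∞) {c : ℝ} (hc : 1/2 ≤ |c|) :
    ∫⁻ y, wker d α y * ∫⁻ u, P.indicator (1 : EuclideanSpace ℝ (Fin d) → ℝ≥0∞) u *
        Q.indicator (1 : EuclideanSpace ℝ (Fin d) → ℝ≥0∞) (u + c • y)
      ≤ CS d α * volume P * (volume Q) ^ (α / (d:ℝ)) := by
  have hw : Measurable (wker d α) := by unfold wker; fun_prop
  have hmeas : AEMeasurable (Function.uncurry fun y u : EuclideanSpace ℝ (Fin d) =>
      wker d α y * (P.indicator (1 : EuclideanSpace ℝ (Fin d) → ℝ≥0∞) u *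
        Q.indicator (1 : EuclideanSpace ℝ (Fin d) → ℝ≥0∞) (u + c • y)))
      ((volume : Measure (EuclideanSpace ℝ (Fin d))).prod volume) := by
    refine Measurable.aemeasurable ?_
    refine Measurable.mul (hw.comp measurable_fst) (Measurable.mul ?_ ?_)
    · exact ind_meas2 hPm measurable_snd
    · exact ind_meas2 hQm (by fun_prop)
  calc ∫⁻ y, wker d α y * ∫⁻ u, P.indicator (1 : EuclideanSpace ℝ (Fin d) → ℝ≥0∞) u *
        Q.indicator (1 : EuclideanSpace ℝ (Fin d) → ℝ≥0∞) (u + c • y)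
      = ∫⁻ y, ∫⁻ u, wker d α y * (P.indicator (1 : EuclideanSpace ℝ (Fin d) → ℝ≥0∞) u *
          Q.indicator (1 : EuclideanSpace ℝ (Fin d) → ℝ≥0∞) (u + c • y)) := by
        refine lintegral_congr fun y => ?_
        rw [lintegral_const_mul' (wker d α y) _ (by unfold wker; exact ENNReal.ofReal_ne_top)]
    _ = ∫⁻ u, ∫⁻ y, wker d α y * (P.indicator (1 : EuclideanSpace ℝ (Fin d) → ℝ≥0∞) u *
          Q.indicator (1 : EuclideanSpace ℝ (Fin d) → ℝ≥0∞) (u + c • y)) :=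
        lintegral_lintegral_swap hmeas
    _ = ∫⁻ u, P.indicator (1 : EuclideanSpace ℝ (Fin d) → ℝ≥0∞) u *
          ∫⁻ y, Q.indicator (1 : EuclideanSpace ℝ (Fin d) → ℝ≥0∞) (u + c • y) * wker d α y := by
        refine lintegral_congr fun u => ?_
        rw [← lintegral_const_mul' _ _
          (lt_of_le_of_lt (ind_le_one P u) ENNReal.one_lt_top).ne]
        refine lintegral_congr fun y => ?_
        ring
    _ ≤ ∫⁻ u, P.indicator (1 : EuclideanSpace ℝ (Fin d) → ℝ≥0∞) u *
          (CS d α * (volume Q) ^ (α / (d:ℝ))) := by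
        refine lintegral_mono fun u => ?_
        refine mul_le_mul' le_rfl ?_
        have := lemS hα0 hαd hQm hQ hc (fun _ => 1) (fun _ => le_rfl) u
        simpa using this
    _ = CS d α * volume P * (volume Q) ^ (α / (d:ℝ)) := by
        rw [lintegral_mul_const' _ _
            (ENNReal.mul_ne_top (CS_ne_top hα0) (ENNReal.rpow_ne_top_of_nonneg
              (by positivity) hQ)),
          lintegral_indicator_one hPm]
        ring

private lemma lemJ (θ : ℝ) {A B : Set (EuclideanSpace ℝ (Fin d))}
    (hA : MeasurableSet A) (hB : MeasurableSet B) :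
    ∫⁻ x, Iop d α θ (A.indicator 1) (B.indicator 1) x
      = ∫⁻ y, wker d α y * ∫⁻ u, A.indicator (1 : EuclideanSpace ℝ (Fin d) → ℝ≥0∞) u *
          B.indicator (1 : EuclideanSpace ℝ (Fin d) → ℝ≥0∞) (u + y) := by
  have hw : Measurable (wker d α) := by unfold wker; fun_prop
  have hmeas : AEMeasurable (Function.uncurry fun x y : EuclideanSpace ℝ (Fin d) =>
      A.indicator (1 : EuclideanSpace ℝ (Fin d) → ℝ≥0∞) (x + (θ-1) • y) *
        B.indicator (1 : EuclideanSpace ℝ (Fin d) → ℝ≥0∞) (x + θ • y) * wker d α y)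
      ((volume : Measure (EuclideanSpace ℝ (Fin d))).prod volume) := by
    refine Measurable.aemeasurable ?_
    exact ((ind_meas2 hA (by fun_prop)).mul (ind_meas2 hB (by fun_prop))).mul
      (hw.comp measurable_snd)
  calc ∫⁻ x, Iop d α θ (A.indicator 1) (B.indicator 1) x
      = ∫⁻ x, ∫⁻ y, A.indicator (1 : EuclideanSpace ℝ (Fin d) → ℝ≥0∞) (x + (θ-1) • y) *
          B.indicator (1 : EuclideanSpace ℝ (Fin d) → ℝ≥0∞) (x + θ • y) * wker d α y := rfl
    _ = ∫⁻ y, ∫⁻ x, A.indicator (1 : EuclideanSpace ℝ (Fin d) → ℝ≥0∞) (x + (θ-1) • y) *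
          B.indicator (1 : EuclideanSpace ℝ (Fin d) → ℝ≥0∞) (x + θ • y) * wker d α y :=
        lintegral_lintegral_swap hmeas
    _ = ∫⁻ y, wker d α y * ∫⁻ u, A.indicator (1 : EuclideanSpace ℝ (Fin d) → ℝ≥0∞) u *
          B.indicator (1 : EuclideanSpace ℝ (Fin d) → ℝ≥0∞) (u + y) := by
        refine lintegral_congr fun y => ?_
        have hpt : ∀ x : EuclideanSpace ℝ (Fin d), x + (θ-1) • y + y = x + θ • y := by
          intro x
          rw [add_assoc]
          congr 1
          rw [sub_smul, one_smul, sub_add_cancel]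
        have htrans := lintegral_add_right_eq_self (μ := (volume : Measure (EuclideanSpace ℝ (Fin d))))
          (fun u => A.indicator (1 : EuclideanSpace ℝ (Fin d) → ℝ≥0∞) u *
            B.indicator (1 : EuclideanSpace ℝ (Fin d) → ℝ≥0∞) (u + y) * wker d α y) ((θ-1) • y)
        calc ∫⁻ x, A.indicator (1 : EuclideanSpace ℝ (Fin d) → ℝ≥0∞) (x + (θ-1) • y) *
              B.indicator (1 : EuclideanSpace ℝ (Fin d) → ℝ≥0∞) (x + θ • y) * wker d α y
            = ∫⁻ x, A.indicator (1 : EuclideanSpace ℝ (Fin d) → ℝ≥0∞) (x + (θ-1) • y) *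
              B.indicator (1 : EuclideanSpace ℝ (Fin d) → ℝ≥0∞) (x + (θ-1) • y + y) * wker d α y := by
              refine lintegral_congr fun x => ?_
              rw [hpt x]
          _ = ∫⁻ u, A.indicator (1 : EuclideanSpace ℝ (Fin d) → ℝ≥0∞) u *
              B.indicator (1 : EuclideanSpace ℝ (Fin d) → ℝ≥0∞) (u + y) * wker d α y := htrans
          _ = wker d α y * ∫⁻ u, A.indicator (1 : EuclideanSpace ℝ (Fin d) → ℝ≥0∞) u *
              B.indicator (1 : EuclideanSpace ℝ (Fin d) → ℝ≥0∞) (u + y) := by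
              rw [← lintegral_const_mul' (wker d α y) _
                (by unfold wker; exact ENNReal.ofReal_ne_top)]
              refine lintegral_congr fun u => ?_
              ring

private lemma lemT1 (hα0 : 0 < α) (hαd : α < (d:ℝ)) (θ : ℝ)
    {A B : Set (EuclideanSpace ℝ (Fin d))} (hA : MeasurableSet A) (hB : MeasurableSet B)
    (hBfin : volume B ≠ ∞) :
    ∫⁻ x, Iop d α θ (A.indicator 1) (B.indicator 1) x
      ≤ CS d α * volume A * (volume B) ^ (α / (d:ℝ)) := by
  rw [lemJ θ hA hB]
  have h1 : ∀ y u : EuclideanSpace ℝ (Fin d), u + y = u + (1:ℝ) • y := by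
    intro y u; rw [one_smul]
  calc ∫⁻ y, wker d α y * ∫⁻ u, A.indicator (1 : EuclideanSpace ℝ (Fin d) → ℝ≥0∞) u *
        B.indicator (1 : EuclideanSpace ℝ (Fin d) → ℝ≥0∞) (u + y)
      = ∫⁻ y, wker d α y * ∫⁻ u, A.indicator (1 : EuclideanSpace ℝ (Fin d) → ℝ≥0∞) u *
        B.indicator (1 : EuclideanSpace ℝ (Fin d) → ℝ≥0∞) (u + (1:ℝ) • y) := by
        refine lintegral_congr fun y => ?_
        congr 1
        exact lintegral_congr fun u => by rw [← h1]
    _ ≤ CS d α * volume A * (volume B) ^ (α / (d:ℝ)) :=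
        lemT0 hα0 hαd hA hB hBfin (by rw [abs_one]; norm_num)

private lemma lemT2 (hα0 : 0 < α) (hαd : α < (d:ℝ)) (θ : ℝ)
    {A B : Set (EuclideanSpace ℝ (Fin d))} (hA : MeasurableSet A) (hB : MeasurableSet B)
    (hAfin : volume A ≠ ∞) :
    ∫⁻ x, Iop d α θ (A.indicator 1) (B.indicator 1) x
      ≤ CS d α * volume B * (volume A) ^ (α / (d:ℝ)) := by
  rw [lemJ θ hA hB]
  calc ∫⁻ y, wker d α y * ∫⁻ u, A.indicator (1 : EuclideanSpace ℝ (Fin d) → ℝ≥0∞) u *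
        B.indicator (1 : EuclideanSpace ℝ (Fin d) → ℝ≥0∞) (u + y)
      = ∫⁻ y, wker d α y * ∫⁻ u, B.indicator (1 : EuclideanSpace ℝ (Fin d) → ℝ≥0∞) u *
        A.indicator (1 : EuclideanSpace ℝ (Fin d) → ℝ≥0∞) (u + (-1:ℝ) • y) := by
        refine lintegral_congr fun y => ?_
        congr 1
        have htrans := lintegral_add_right_eq_self (μ := (volume : Measure (EuclideanSpace ℝ (Fin d))))
          (fun u => B.indicator (1 : EuclideanSpace ℝ (Fin d) → ℝ≥0∞) u *
            A.indicator (1 : EuclideanSpace ℝ (Fin d) → ℝ≥0∞) (u + (-1:ℝ) • y)) y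
        rw [← htrans]
        refine lintegral_congr fun x => ?_
        have hx : x + y + (-1:ℝ) • y = x := by
          rw [neg_smul, one_smul, add_assoc, add_neg_cancel, add_zero]
        rw [hx, mul_comm]
    _ ≤ CS d α * volume B * (volume A) ^ (α / (d:ℝ)) :=
        lemT0 hα0 hαd hB hA hAfin (by rw [abs_neg, abs_one]; norm_num)

private lemma iop_meas (θ : ℝ) {A B : Set (EuclideanSpace ℝ (Fin d))}
    (hA : MeasurableSet A) (hB : MeasurableSet B) :
    Measurable (Iop d α θ (A.indicator 1) (B.indicator 1)) := by
  have hw : Measurable (wker d α) := by unfold wker; fun_prop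
  refine Measurable.lintegral_prod_right (f := fun x y =>
    A.indicator (1 : EuclideanSpace ℝ (Fin d) → ℝ≥0∞) (x + (θ-1) • y) *
      B.indicator (1 : EuclideanSpace ℝ (Fin d) → ℝ≥0∞) (x + θ • y) *
      ENNReal.ofReal (‖y‖ ^ (α - (d:ℝ)))) ?_
  exact ((ind_meas2 hA (by fun_prop)).mul (ind_meas2 hB (by fun_prop))).mul
    ((hw.comp measurable_snd))

private lemma supB (hα0 : 0 < α) (hαd : α < (d:ℝ))
    {B : Set (EuclideanSpace ℝ (Fin d))} (hBm : MeasurableSet B) (hBfin : volume B ≠ ∞)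
    {θ : ℝ} (hθ0 : 0 ≤ θ) (hθ2 : 1/2 ≤ θ) (A : Set (EuclideanSpace ℝ (Fin d)))
    (x : EuclideanSpace ℝ (Fin d)) :
    Iop d α θ (A.indicator 1) (B.indicator 1) x ≤ CS d α * (volume B) ^ (α / (d:ℝ)) :=
  lemS hα0 hαd hBm hBfin (c := θ) (by rwa [abs_of_nonneg hθ0])
    (fun y => A.indicator (1 : EuclideanSpace ℝ (Fin d) → ℝ≥0∞) (x + (θ-1) • y))
    (fun y => ind_le_one _ _) x

private lemma supA (hα0 : 0 < α) (hαd : α < (d:ℝ))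
    {A : Set (EuclideanSpace ℝ (Fin d))} (hAm : MeasurableSet A) (hAfin : volume A ≠ ∞)
    {θ : ℝ} (hθ2 : θ ≤ 1/2) (B : Set (EuclideanSpace ℝ (Fin d)))
    (x : EuclideanSpace ℝ (Fin d)) :
    Iop d α θ (A.indicator 1) (B.indicator 1) x ≤ CS d α * (volume A) ^ (α / (d:ℝ)) := by
  have hrw : Iop d α θ (A.indicator 1) (B.indicator 1) x
      = ∫⁻ y, B.indicator (1 : EuclideanSpace ℝ (Fin d) → ℝ≥0∞) (x + θ • y) *
          A.indicator (1 : EuclideanSpace ℝ (Fin d) → ℝ≥0∞) (x + (θ-1) • y) * wker d α y :=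
    lintegral_congr fun y => by unfold wker; ring
  rw [hrw]
  exact lemS hα0 hαd hAm hAfin (c := θ-1) (by rw [abs_of_nonpos (by linarith)]; linarith)
    (fun y => B.indicator (1 : EuclideanSpace ℝ (Fin d) → ℝ≥0∞) (x + θ • y))
    (fun y => ind_le_one _ _) x

private lemma final_chain {L V P Q C : ℝ≥0∞} {s : ℝ} (hs0 : 0 ≤ s) (hs1 : s ≤ 1)
    (h1 : L ≤ C * Q ^ s) (h2 : L * V ≤ C * P * Q ^ s) :
    L * V ^ s ≤ C * P ^ s * Q ^ s := by
  have e1 : L * V ^ s = L ^ (1 - s) * (L * V) ^ s := by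
    rw [ENNReal.mul_rpow_of_nonneg _ _ hs0, ← mul_assoc,
      ← ENNReal.rpow_add_of_nonneg _ _ (by linarith) hs0, sub_add_cancel, ENNReal.rpow_one]
  rw [e1]
  calc L ^ (1-s) * (L*V) ^ s ≤ (C * Q^s) ^ (1-s) * (C * P * Q^s) ^ s :=
        mul_le_mul' (ENNReal.rpow_le_rpow h1 (by linarith)) (ENNReal.rpow_le_rpow h2 hs0)
    _ = (C^(1-s) * C^s) * P^s * ((Q^s)^(1-s) * (Q^s)^s) := by
        rw [ENNReal.mul_rpow_of_nonneg _ _ (by linarith : (0:ℝ) ≤ 1 - s),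
          ENNReal.mul_rpow_of_nonneg _ _ hs0, ENNReal.mul_rpow_of_nonneg _ _ hs0]
        ring
    _ = C * P^s * Q^s := by
        rw [← ENNReal.rpow_add_of_nonneg _ _ (by linarith) hs0, sub_add_cancel,
          ENNReal.rpow_one, ← ENNReal.rpow_add_of_nonneg _ _ (by linarith) hs0,
          sub_add_cancel, ENNReal.rpow_one]

end Stmt11Aux

theorem stmt11 (d : ℕ) (α : ℝ) (hα0 : 0 < α) (hαd : α < d) :
    ∃ c₄ : ℝ, 0 < c₄ ∧
      ∀ θ : ℝ, θ ∈ Set.Icc (0 : ℝ) 1 →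
        ∀ A B : Set (EuclideanSpace ℝ (Fin d)),
          MeasurableSet A → MeasurableSet B → volume A < ∞ → volume B < ∞ →
          wLp d ((d : ℝ) / α) (Iop d α θ (A.indicator 1) (B.indicator 1)) ≤
            ENNReal.ofReal c₄ * (volume A) ^ (α / (d : ℝ)) * (volume B) ^ (α / (d : ℝ)) := by
  have hd0 : (0:ℝ) < d := lt_trans hα0 hαd
  have htR : (0:ℝ) ≤ (CS d α).toReal := ENNReal.toReal_nonneg
  refine ⟨(CS d α).toReal + 1, by linarith, ?_⟩
  intro θ hθ A B hAm hBm hAfin hBfin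
  have hCle : CS d α ≤ ENNReal.ofReal ((CS d α).toReal + 1) := by
    rw [ENNReal.ofReal_add ENNReal.toReal_nonneg zero_le_one,
      ENNReal.ofReal_toReal (CS_ne_top hα0), ENNReal.ofReal_one]
    exact le_self_add
  have hs0 : 0 < α / (d:ℝ) := div_pos hα0 hd0
  have hs1 : α / (d:ℝ) ≤ 1 := le_of_lt ((div_lt_one hd0).mpr hαd)
  rw [wLp]
  simp only [one_div_div]
  refine iSup_le fun lam => iSup_le fun hlam => ?_
  set I := Iop d α θ (A.indicator 1) (B.indicator 1) with hI
  set L := ENNReal.ofReal lam with hL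
  have hmarkov : L * volume {x | L < I x} ≤ ∫⁻ x, I x := by
    calc L * volume {x | L < I x} ≤ L * volume {x | L ≤ I x} :=
          mul_le_mul' le_rfl (measure_mono fun x hx => le_of_lt (Set.mem_setOf_eq ▸ hx))
      _ ≤ ∫⁻ x, I x := mul_meas_ge_le_lintegral₀ (iop_meas θ hAm hBm).aemeasurable L
  rcases eq_or_ne (volume {x | L < I x}) 0 with hE0 | hE0
  · rw [hE0, ENNReal.zero_rpow_of_pos hs0, mul_zero]
    exact zero_le
  obtain ⟨x₀, hx₀⟩ := nonempty_of_measure_ne_zero hE0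
  have hx₀' : L < I x₀ := hx₀
  rcases le_total ((1:ℝ)/2) θ with hθ2 | hθ2
  · have hsup : L ≤ CS d α * (volume B) ^ (α/(d:ℝ)) :=
      le_of_lt (lt_of_lt_of_le hx₀' (supB hα0 hαd hBm hBfin.ne hθ.1 hθ2 A x₀))
    have hint : L * volume {x | L < I x} ≤ CS d α * volume A * (volume B) ^ (α/(d:ℝ)) :=
      le_trans hmarkov (lemT1 hα0 hαd θ hAm hBm hBfin.ne)
    calc L * volume {x | L < I x} ^ (α/(d:ℝ))
        ≤ CS d α * volume A ^ (α/(d:ℝ)) * volume B ^ (α/(d:ℝ)) :=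
          final_chain hs0.le hs1 hsup hint
      _ ≤ ENNReal.ofReal ((CS d α).toReal + 1) * volume A ^ (α/(d:ℝ)) * volume B ^ (α/(d:ℝ)) :=
          mul_le_mul' (mul_le_mul' hCle le_rfl) le_rfl
  · have hsup : L ≤ CS d α * (volume A) ^ (α/(d:ℝ)) :=
      le_of_lt (lt_of_lt_of_le hx₀' (supA hα0 hαd hAm hAfin.ne hθ2 B x₀))
    have hint : L * volume {x | L < I x} ≤ CS d α * volume B * (volume A) ^ (α/(d:ℝ)) :=
      le_trans hmarkov (lemT2 hα0 hαd θ hAm hBm hAfin.ne)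
    calc L * volume {x | L < I x} ^ (α/(d:ℝ))
        ≤ CS d α * volume B ^ (α/(d:ℝ)) * volume A ^ (α/(d:ℝ)) :=
          final_chain hs0.le hs1 hsup hint
      _ = CS d α * volume A ^ (α/(d:ℝ)) * volume B ^ (α/(d:ℝ)) := by ring
      _ ≤ ENNReal.ofReal ((CS d α).toReal + 1) * volume A ^ (α/(d:ℝ)) * volume B ^ (α/(d:ℝ)) :=
          mul_le_mul' (mul_le_mul' hCle le_rfl) le_rfl
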